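/- arXiv:1601.07279 — 3 statements merged into one kernel-verified Lean document; each statement's English description precedes it below -/
import Mathlib

section
/- Adding a reward transformation of the form b ↦ [(I - γ(T^a)ᵀ)g]ᵀ b to the reward function leaves the fixed point policy of the Bellman equation unchanged: if V* satisfies V*(b) = max_a [ρ(b,a) + γ ∑_z η(z|b,a) V*(τ(b,a,z))], then V̲(b) := V*(b) + gᵀb satisfies V̲(b) = max_a [ρ̲(b,a) + γ ∑_z η(z|b,a) V̲(τ(b,a,z))] where ρ̲(b,a) = ρ(b,a) + [(I - γ(T^a)ᵀ)g]ᵀ b, and the argmax sets coincide at every b. -/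
/-- membership in the probability simplex -/
def IsPMF {S : ℕ} (b : Fin S → ℝ) : Prop :=
  (∀ i, 0 ≤ b i) ∧ ∑ i, b i = 1


lemma sup'_add_const' {α : Type*} (s : Finset α) (hs : s.Nonempty) (f : α → ℝ) (c : ℝ) :
    s.sup' hs (fun a => f a + c) = s.sup' hs f + c := by
  apply le_antisymm
  · exact Finset.sup'_le _ _ fun a ha => (add_le_add_iff_right c).mpr (Finset.le_sup' f ha)
  · obtain ⟨a, ha, h⟩ := Finset.exists_mem_eq_sup' hs f
    rw [h]
    exact Finset.le_sup' (fun a => f a + c) ha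

theorem reward_transformation_preserves_policy {S A Z : ℕ} (hA : 0 < A)
    (γ : ℝ) (hγ0 : 0 ≤ γ) (hγ1 : γ < 1)
    -- transition model T a s' s, column-stochastic; observation model O a z s'
    (T : Fin A → Fin S → Fin S → ℝ)
    (hT0 : ∀ a s' s, 0 ≤ T a s' s) (hT1 : ∀ a s, ∑ s', T a s' s = 1)
    (O : Fin A → Fin Z → Fin S → ℝ)
    (hO0 : ∀ a z s', 0 ≤ O a z s') (hO1 : ∀ a s', ∑ z, O a z s' = 1)
    (ρ : (Fin S → ℝ) → Fin A → ℝ) (g : Fin S → ℝ)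
    -- predicted belief, observation likelihood, Bayes update
    (pred : (Fin S → ℝ) → Fin A → Fin S → ℝ)
    (hpred : ∀ b a s', pred b a s' = ∑ s, T a s' s * b s)
    (η : (Fin S → ℝ) → Fin A → Fin Z → ℝ)
    (hη : ∀ b a z, η b a z = ∑ s', O a z s' * pred b a s')
    (τ : (Fin S → ℝ) → Fin A → Fin Z → Fin S → ℝ)
    (hτ : ∀ b a z s', τ b a z s' = O a z s' * pred b a s' / η b a z)
    -- the original and transformed Q-values and rewards
    (V : (Fin S → ℝ) → ℝ)
    (Q : (Fin S → ℝ) → Fin A → ℝ)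
    (hQ : ∀ b a, Q b a = ρ b a + γ * ∑ z, η b a z * V (τ b a z))
    (ρl : (Fin S → ℝ) → Fin A → ℝ)
    (hρl : ∀ b a, ρl b a =
      ρ b a + ∑ i, (g i - γ * ∑ j, T a j i * g j) * b i)
    (Vl : (Fin S → ℝ) → ℝ)
    (hVl : ∀ b, Vl b = V b + ∑ i, g i * b i)
    (Ql : (Fin S → ℝ) → Fin A → ℝ)
    (hQl : ∀ b a, Ql b a = ρl b a + γ * ∑ z, η b a z * Vl (τ b a z))
    -- V* satisfies the Bellman fixed point equation
    (hfix : ∀ b, IsPMF b →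
      V b = Finset.univ.sup' ⟨⟨0, hA⟩, Finset.mem_univ _⟩ (fun a => Q b a)) :
    ∀ b, IsPMF b →
      (Vl b = Finset.univ.sup' ⟨⟨0, hA⟩, Finset.mem_univ _⟩ (fun a => Ql b a)) ∧
      (∀ a : Fin A, Q b a = V b ↔ Ql b a = Vl b) := by
  intro b hb
  set c : ℝ := ∑ i, g i * b i with hc
  have hpred0 : ∀ a s', 0 ≤ pred b a s' := by
    intro a s'
    rw [hpred]
    exact Finset.sum_nonneg fun s _ => mul_nonneg (hT0 a s' s) (hb.1 s)
  have hkey : ∀ a s', ∑ z, η b a z * τ b a z s' = pred b a s' := by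
    intro a s'
    have h1 : ∀ z, η b a z * τ b a z s' = O a z s' * pred b a s' := by
      intro z
      by_cases h0 : η b a z = 0
      · have : O a z s' * pred b a s' = 0 := by
          have hterm := (Finset.sum_eq_zero_iff_of_nonneg
            (fun s _ => mul_nonneg (hO0 a z s) (hpred0 a s))).mp ((hη b a z).symm.trans h0)
          exact hterm s' (Finset.mem_univ s')
        rw [h0, this, zero_mul]
      · rw [hτ, mul_div_cancel₀ _ h0]
    rw [Finset.sum_congr rfl fun z _ => h1 z, ← Finset.sum_mul, hO1, one_mul]
  have hQlQ : ∀ a, Ql b a = Q b a + c := by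
    intro a
    have hsplit : ∀ z, η b a z * Vl (τ b a z)
        = η b a z * V (τ b a z) + ∑ i, g i * (η b a z * τ b a z i) := by
      intro z
      rw [hVl, mul_add, Finset.mul_sum]
      congr 1
      apply Finset.sum_congr rfl
      intro i _
      ring
    rw [hQl, hρl, hQ]
    rw [Finset.sum_congr rfl fun z _ => hsplit z, Finset.sum_add_distrib,
      Finset.sum_comm]
    have h2 : ∀ i, ∑ z, g i * (η b a z * τ b a z i) = g i * pred b a i := by
      intro i
      rw [← Finset.mul_sum, hkey]
    rw [Finset.sum_congr rfl fun i _ => h2 i]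
    have h3 : ∑ i, (g i - γ * ∑ j, T a j i * g j) * b i
        = c - γ * ∑ i, g i * pred b a i := by
      have : ∑ i, g i * pred b a i = ∑ i, (∑ j, T a j i * g j) * b i := by
        simp only [hpred, Finset.mul_sum, Finset.sum_mul]
        rw [Finset.sum_comm]
        apply Finset.sum_congr rfl; intro i _
        apply Finset.sum_congr rfl; intro j _
        ring
      rw [this, hc, Finset.mul_sum, ← Finset.sum_sub_distrib]
      apply Finset.sum_congr rfl; intro i _
      ring
    rw [h3]
    ring
  refine ⟨?_, ?_⟩
  · have : (fun a => Ql b a) = fun a => Q b a + c := funext hQlQ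
    rw [hVl b, hfix b hb, this]; exact (sup'_add_const' _ _ (fun a => Q b a) c).symm
  · intro a
    rw [hQlQ a, hVl b, ← hc, add_left_inj]
end

section
/- If the matrix of linear constraints (∂ρ/∂b)|_{b₀}·K + [(I - γ(T^a)ᵀ)g]ᵀ·K ≥ 0 holds componentwise for all actions a, where K is the bidiagonal matrix with 1 on the diagonal and -1 on the superdiagonal, then the transformed reward ρ̲(b,a) = ρ(b,a) + [(I-γ(T^a)ᵀ)g]ᵀb has nonnegative directional derivatives in all MLR-increasing directions at b₀; in particular, on the two-state simplex, a linear reward ρ(b,a) = rₐᵀb with the constraint satisfied globally implies ρ̲(·,a) is monotone increasing in b(2). -/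
theorem transformed_reward_monotone_two_state {A : Type*}
    (γ : ℝ) (hγ0 : 0 ≤ γ) (hγ1 : γ < 1)
    (r : A → Fin 2 → ℝ) (g : Fin 2 → ℝ)
    (T : A → Fin 2 → Fin 2 → ℝ)
    (hT0 : ∀ a s' s, 0 ≤ T a s' s) (hT1 : ∀ a s, ∑ s', T a s' s = 1)
    -- the transformed reward coefficients  φᵃ = rₐ + (I - γ(Tᵃ)ᵀ)g
    (φ : A → Fin 2 → ℝ)
    (hφ : ∀ a i, φ a i = r a i + g i - γ * ∑ j, T a j i * g j)
    (K : Matrix (Fin 2) (Fin 2) ℝ) (hK : K = !![1, -1; 0, 1])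
    -- the constraint  φᵃᵀ K ≥ 0  componentwise, for all actions
    (hcon : ∀ a : A, ∀ j : Fin 2, 0 ≤ ∑ i, φ a i * K i j) :
    -- then the transformed reward  ρ̲(b,a) = φᵃᵀ b  is increasing in b(2) = p
    ∀ a : A, ∀ p q : ℝ, 0 ≤ p → p ≤ q → q ≤ 1 →
      φ a 0 * (1 - p) + φ a 1 * p ≤ φ a 0 * (1 - q) + φ a 1 * q := by
  intro a p q _ hpq _
  have h := hcon a 1
  simp [hK, Fin.sum_univ_two, Matrix.cons_val_one, Matrix.cons_val_zero] at h
  nlinarith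
end

section
/- If T and O are TP2 column-stochastic/row-stochastic matrices respectively (with O_{z,s} the probability of observation z in state s), then the Bayes posterior update b ↦ τ(b,z) with τ(b,z)(s') ∝ O_{z,s'}·(Tb)(s') preserves MLR dominance: b1 ≥_r b2 implies τ(b1,z) ≥_r τ(b2,z), whenever the normalizers are positive. -/
/-- MLR dominance: b1 ≥_r b2 -/
def MLRge {S : ℕ} (b1 b2 : Fin S → ℝ) : Prop :=
  ∀ i j : Fin S, i < j → b1 i * b2 j ≤ b2 i * b1 j

theorem bayes_update_preserves_mlr {S Z : ℕ}
    (T : Fin S → Fin S → ℝ) (O : Fin Z → Fin S → ℝ)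
    (hT0 : ∀ s' s, 0 ≤ T s' s) (hT1 : ∀ s, ∑ s', T s' s = 1)
    (hTtp2 : ∀ i j k l : Fin S, i < j → k < l → T i l * T j k ≤ T i k * T j l)
    (hO0 : ∀ z s, 0 ≤ O z s) (hO1 : ∀ s, ∑ z, O z s = 1)
    (hOtp2 : ∀ (z1 z2 : Fin Z) (s1 s2 : Fin S), z1 < z2 → s1 < s2 →
      O z1 s2 * O z2 s1 ≤ O z1 s1 * O z2 s2)
    (b1 b2 : Fin S → ℝ)
    (hb10 : ∀ i, 0 ≤ b1 i) (hb20 : ∀ i, 0 ≤ b2 i)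
    (hb11 : ∑ i, b1 i = 1) (hb21 : ∑ i, b2 i = 1)
    (hmlr : MLRge b1 b2)
    (z : Fin Z)
    (hnorm1 : 0 < ∑ s', O z s' * ∑ s, T s' s * b1 s)
    (hnorm2 : 0 < ∑ s', O z s' * ∑ s, T s' s * b2 s) :
    MLRge
      (fun s' => O z s' * (∑ s, T s' s * b1 s) /
        ∑ t, O z t * ∑ s, T t s * b1 s)
      (fun s' => O z s' * (∑ s, T s' s * b2 s) /
        ∑ t, O z t * ∑ s, T t s * b2 s) := by
  intro i j hij
  simp only
  -- key: T preserves MLR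
  have hkey : (∑ s, T i s * b1 s) * (∑ s, T j s * b2 s) ≤
      (∑ s, T i s * b2 s) * (∑ s, T j s * b1 s) := by
    set g : Fin S → Fin S → ℝ := fun s t => T i s * T j t * (b2 s * b1 t - b1 s * b2 t) with hg
    have hpair : ∀ s t : Fin S, 0 ≤ g s t + g t s := by
      intro s t
      rcases lt_trichotomy s t with h | h | h
      · have h1 := hTtp2 i j s t hij h
        have h2 := hmlr s t h
        have := mul_nonneg (sub_nonneg.2 h1) (sub_nonneg.2 h2)
        simp only [hg]; nlinarith [this]
      · simp [hg, h]; ring_nf; nlinarith []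
      · have h1 := hTtp2 i j t s hij h
        have h2 := hmlr t s h
        have := mul_nonneg (sub_nonneg.2 h1) (sub_nonneg.2 h2)
        simp only [hg]; nlinarith [this]
    have hsum : 0 ≤ ∑ s, ∑ t, g s t := by
      have h2 : (2:ℝ) * ∑ s, ∑ t, g s t = ∑ s, ∑ t, (g s t + g t s) := by
        simp only [Finset.sum_add_distrib]
        rw [Finset.sum_comm (f := fun s t => g t s)]
        ring
      have h3 : 0 ≤ ∑ s, ∑ t, (g s t + g t s) :=
        Finset.sum_nonneg fun s _ => Finset.sum_nonneg fun t _ => hpair s t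
      linarith
    have expand : (∑ s, T i s * b2 s) * (∑ s, T j s * b1 s) -
        (∑ s, T i s * b1 s) * (∑ s, T j s * b2 s) = ∑ s, ∑ t, g s t := by
      rw [Finset.sum_mul_sum, Finset.sum_mul_sum, ← Finset.sum_sub_distrib]
      refine Finset.sum_congr rfl fun s _ => ?_
      rw [← Finset.sum_sub_distrib]
      refine Finset.sum_congr rfl fun t _ => ?_
      simp only [hg]; ring
    linarith
  rw [div_mul_div_comm, div_mul_div_comm,
    div_le_div_iff₀ (by positivity) (by positivity)]
  have hc : 0 ≤ O z i * O z j *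
      ((∑ s', O z s' * ∑ s, T s' s * b1 s) * (∑ s', O z s' * ∑ s, T s' s * b2 s)) := by
    have := mul_nonneg (hO0 z i) (hO0 z j)
    positivity
  nlinarith [mul_le_mul_of_nonneg_left hkey hc]
end
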